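/- For every m ≥ 3 there exists a subgroup G of Sp_{2m}(𝔽₂) such that: (a) there is no quadratic form of Arf invariant 0 with polar form the standard symplectic form that is fixed by every element of G; and (b) for every g ∈ G there exists a quadratic form of Arf invariant 0 with the standard polar form fixed by g. -/

import Mathlib

namespace Stmt14Aux14N

lemma z2_add_self (z : ZMod 2) : z + z = 0 := by revert z; decide

variable {m : ℕ}

def i0 (hm : 3 ≤ m) : Fin m := ⟨0, by omega⟩
def i1 (hm : 3 ≤ m) : Fin m := ⟨1, by omega⟩

lemma i0_ne_i1 (hm : 3 ≤ m) : i0 hm ≠ i1 hm := by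
  simp [i0, i1, Fin.ext_iff]

def vv (hm : 3 ≤ m) (p q : ZMod 2) : Fin m → ZMod 2 :=
  fun i => (if i = i0 hm then p else 0) + (if i = i1 hm then q else 0)

lemma vv_i0 (hm : 3 ≤ m) (p q : ZMod 2) : vv hm p q (i0 hm) = p := by
  simp [vv, i0_ne_i1 hm]

lemma vv_i1 (hm : 3 ≤ m) (p q : ZMod 2) : vv hm p q (i1 hm) = q := by
  simp [vv, (i0_ne_i1 hm).symm]

lemma vv_add (hm : 3 ≤ m) (p q p' q' : ZMod 2) :
    vv hm p q + vv hm p' q' = vv hm (p + p') (q + q') := by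
  funext i
  simp only [Pi.add_apply, vv]
  split <;> split <;> ring

lemma sum_vv_mul (hm : 3 ≤ m) (p q : ZMod 2) (d : Fin m → ZMod 2) :
    ∑ i, vv hm p q i * d i = p * d (i0 hm) + q * d (i1 hm) := by
  unfold vv
  simp only [add_mul, ite_mul, zero_mul, Finset.sum_add_distrib]
  rw [Fintype.sum_ite_eq' (i0 hm) (fun i => p * d i),
    Fintype.sum_ite_eq' (i1 hm) (fun i => q * d i)]

lemma sum_mul_vv (hm : 3 ≤ m) (p q : ZMod 2) (d : Fin m → ZMod 2) :
    ∑ i, d i * vv hm p q i = d (i0 hm) * p + d (i1 hm) * q := by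
  rw [Finset.sum_congr rfl fun i _ => mul_comm (d i) (vv hm p q i), sum_vv_mul]
  ring

abbrev V' (m : ℕ) := (Fin m → ZMod 2) × (Fin m → ZMod 2)

def gp (hm : 3 ≤ m) (α β γ : ZMod 2) : V' m ≃ₗ[ZMod 2] V' m where
  toFun x := (x.1 + vv hm (α * x.2 (i0 hm) + γ * x.2 (i1 hm))
      (γ * x.2 (i0 hm) + β * x.2 (i1 hm)), x.2)
  invFun x := (x.1 + vv hm (α * x.2 (i0 hm) + γ * x.2 (i1 hm))
      (γ * x.2 (i0 hm) + β * x.2 (i1 hm)), x.2)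
  map_add' x y := by
    ext i
    · simp only [Pi.add_apply, Prod.fst_add, Prod.snd_add, vv]
      split <;> split <;> ring
    · rfl
  map_smul' c x := by
    ext i
    · simp only [Prod.smul_fst, Prod.smul_snd, Pi.smul_apply, smul_eq_mul, RingHom.id_apply, vv,
        Pi.add_apply]
      split <;> split <;> ring
    · rfl
  left_inv x := by
    ext i
    · simp only [Pi.add_apply, vv]
      split <;> split <;> ring_nf <;>
        simp [show (2 : ZMod 2) = 0 by decide]
    · rfl
  right_inv x := by
    ext i
    · simp only [Pi.add_apply, vv]
      split <;> split <;> ring_nf <;>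
        simp [show (2 : ZMod 2) = 0 by decide]
    · rfl

lemma gp_apply (hm : 3 ≤ m) (α β γ : ZMod 2) (x : V' m) :
    gp hm α β γ x = (x.1 + vv hm (α * x.2 (i0 hm) + γ * x.2 (i1 hm))
      (γ * x.2 (i0 hm) + β * x.2 (i1 hm)), x.2) := rfl

lemma gp_mul (hm : 3 ≤ m) (α β γ α' β' γ' : ZMod 2) :
    gp hm α β γ * gp hm α' β' γ' = gp hm (α + α') (β + β') (γ + γ') := by
  apply LinearEquiv.toLinearMap_injective
  apply LinearMap.ext
  intro x
  show gp hm α β γ (gp hm α' β' γ' x) = gp hm (α + α') (β + β') (γ + γ') x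
  simp only [gp_apply]
  refine Prod.ext ?_ rfl
  funext i
  simp only [Pi.add_apply, vv]
  split <;> split <;> ring

lemma gp_invol (hm : 3 ≤ m) (α β γ : ZMod 2) :
    gp hm α β γ * gp hm α β γ = 1 := by
  rw [gp_mul]
  apply LinearEquiv.toLinearMap_injective
  apply LinearMap.ext
  intro x
  show gp hm (α+α) (β+β) (γ+γ) x = x
  simp only [gp_apply, z2_add_self]
  refine Prod.ext ?_ rfl
  funext i
  simp [vv]

def GG (hm : 3 ≤ m) : Subgroup (V' m ≃ₗ[ZMod 2] V' m) where
  carrier := {g | ∃ α β γ : ZMod 2, g = gp hm α β γ}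
  one_mem' := ⟨0, 0, 0, by
    have h := gp_invol hm 0 0 0
    have h2 : gp hm 0 0 0 * gp hm 0 0 0 = gp hm 0 0 0 := by
      rw [gp_mul]; norm_num
    rw [← h, h2]⟩
  mul_mem' := by
    rintro g h ⟨α, β, γ, rfl⟩ ⟨α', β', γ', rfl⟩
    exact ⟨α + α', β + β', γ + γ', gp_mul hm α β γ α' β' γ'⟩
  inv_mem' := by
    rintro g ⟨α, β, γ, rfl⟩
    exact ⟨α, β, γ, inv_eq_of_mul_eq_one_left (gp_invol hm α β γ)⟩



lemma z2_cases (z : ZMod 2) : z = 0 ∨ z = 1 := by revert z; decide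
lemma z2_ne0 {z : ZMod 2} (h : z ≠ 0) : z = 1 := by
  rcases z2_cases z with h0 | h1
  · exact absurd h0 h
  · exact h1

lemma card_P (m : ℕ) : Fintype.card (Fin m → ZMod 2) = 2 ^ m := by
  simp [ZMod.card]

/-- count of zeros of a nonzero linear functional on 𝔽₂^m -/
lemma inner_count {m : ℕ} (a : Fin m → ZMod 2) (i : Fin m) (hi : a i = 1) :
    (Finset.univ.filter fun b : Fin m → ZMod 2 => ∑ j, a j * b j = 0).card = 2 ^ (m - 1) := by
  classical
  set S0 := Finset.univ.filter fun b : Fin m → ZMod 2 => ∑ j, a j * b j = 0 with hS0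
  set S1 := Finset.univ.filter fun b : Fin m → ZMod 2 => ∑ j, a j * b j = 1 with hS1
  have e : Fin m → ZMod 2 := fun j => if j = i then 1 else 0
  have hphi : ∀ b : Fin m → ZMod 2,
      (∑ j, a j * (b j + (if j = i then (1:ZMod 2) else 0))) = (∑ j, a j * b j) + 1 := by
    intro b
    have : ∀ j, a j * (b j + (if j = i then (1:ZMod 2) else 0))
        = a j * b j + (if j = i then a j else 0) := by
      intro j; split <;> ring
    rw [Finset.sum_congr rfl fun j _ => this j, Finset.sum_add_distrib,
      Fintype.sum_ite_eq' i a, hi]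
  have h01 : S0.card = S1.card := by
    apply Finset.card_nbij' (fun b => b + fun j => if j = i then 1 else 0)
      (fun b => b + fun j => if j = i then 1 else 0)
    · intro b hb
      simp only [hS0, Finset.mem_filter, Finset.mem_univ, true_and] at hb
      simp only [hS1, Finset.mem_filter, Finset.mem_univ, true_and]
      have := hphi b
      simp only [Finset.mem_coe, Finset.mem_filter, Finset.mem_univ, true_and] at hb ⊢
      show ∑ j, a j * (b j + (if j = i then (1:ZMod 2) else 0)) = 1
      rw [this, hb]; decide
    · intro b hb
      simp only [hS1, Finset.mem_filter, Finset.mem_univ, true_and] at hb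
      simp only [hS0, Finset.mem_filter, Finset.mem_univ, true_and]
      have := hphi b
      simp only [Finset.mem_coe, Finset.mem_filter, Finset.mem_univ, true_and] at hb ⊢
      show ∑ j, a j * (b j + (if j = i then (1:ZMod 2) else 0)) = 0
      rw [this, hb]; decide
    · intro b _
      funext j; simp only [Pi.add_apply]
      rw [add_assoc, z2_add_self, add_zero]
    · intro b _
      funext j; simp only [Pi.add_apply]
      rw [add_assoc, z2_add_self, add_zero]
  have hsum : S0.card + S1.card = 2 ^ m := by
    have h1 : S1 = Finset.univ.filter fun b : Fin m → ZMod 2 => ¬ (∑ j, a j * b j = 0) := by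
      apply Finset.filter_congr
      intro b _
      constructor
      · intro h h0; rw [h0] at h; exact absurd h (by decide)
      · intro h; exact z2_ne0 h
    rw [h1, Finset.card_filter_add_card_filter_not, Finset.card_univ, card_P]
  have hm1 : 1 ≤ m := i.pos
  have h2m : 2 ^ m = 2 * 2 ^ (m - 1) := by
    rw [← pow_succ']
    congr 1
    omega
  omega

lemma count0 {m : ℕ} (hm : 1 ≤ m) :
    Nat.card {x : (Fin m → ZMod 2) × (Fin m → ZMod 2) // (∑ i, x.1 i * x.2 i) = 0}
      = 2 ^ (m - 1) * (2 ^ m + 1) := by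
  classical
  rw [Nat.card_eq_fintype_card, Fintype.card_subtype, Finset.card_filter,
    Fintype.sum_prod_type]
  have h : ∀ a : Fin m → ZMod 2,
      (∑ b : Fin m → ZMod 2, if (∑ i, a i * b i) = 0 then 1 else 0)
        = if a = 0 then 2 ^ m else 2 ^ (m - 1) := by
    intro a
    rw [← Finset.card_filter]
    by_cases ha : a = 0
    · subst ha
      simp [Finset.filter_true_of_mem, card_P]
    · rw [if_neg ha]
      obtain ⟨i, hi⟩ : ∃ i, a i ≠ 0 := by
        by_contra h
        push_neg at h
        exact ha (funext h)
      exact inner_count a i (z2_ne0 hi)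
  rw [Finset.sum_congr rfl fun a _ => h a, Finset.sum_ite, Finset.sum_const, Finset.sum_const]
  rw [Finset.filter_eq', if_pos (Finset.mem_univ _), Finset.filter_ne', Finset.card_erase_of_mem
    (Finset.mem_univ _), Finset.card_univ, card_P]
  simp only [Finset.card_singleton, smul_eq_mul, one_mul]
  have h2m : 2 ^ m = 2 * 2 ^ (m - 1) := by
    rw [← pow_succ']; congr 1; omega
  set t := 2 ^ (m - 1) with ht
  rw [h2m]
  have htt : (2 * t - 1) * t = 2 * (t * t) - t := by
    rw [Nat.sub_mul]; ring_nf
  have h1t : 1 ≤ t := Nat.one_le_two_pow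
  have h4 : t * (2 * t + 1) = 2 * (t * t) + t := by ring
  have h5 : t ≤ t * t := Nat.le_mul_of_pos_left t h1t
  omega


lemma key_sympl : ∀ α β γ b0 b1 d0 d1 : ZMod 2,
    (α*b0+γ*b1)*d0 + (γ*b0+β*b1)*d1 + (b0*(α*d0+γ*d1) + b1*(γ*d0+β*d1)) = 0 := by decide

lemma key_s : ∀ α β γ : ZMod 2, ∃ s0 s1 : ZMod 2, α*s0+γ*s1 = α ∧ γ*s0+β*s1 = β := by decide

lemma key_fix : ∀ α β γ s0 s1 b0 b1 : ZMod 2, α*s0+γ*s1 = α → γ*s0+β*s1 = β →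
    (α*b0+γ*b1)*(b0+s0) + (γ*b0+β*b1)*(b1+s1) = 0 := by decide

lemma key_quad : ∀ a b c d s : ZMod 2, (a+c)*((b+d)+s) + (a*(b+s) + c*(d+s)) = a*d + c*b := by
  decide

end Stmt14Aux14N


open Stmt14Aux14N

/-- **Existence of the group-theoretic counterexample subgroup of Sp_{2m}(𝔽₂), m ≥ 3.**
Model `𝔽₂^{2m}` as `V = (Fin m → 𝔽₂) × (Fin m → 𝔽₂)` with the standard symplectic
form `⟨(a,b),(c,d)⟩ = ∑ᵢ aᵢdᵢ + bᵢcᵢ`.  `Sp_{2m}(𝔽₂)` is the group of linear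
automorphisms preserving this form; a quadratic form with this polar form satisfies
`Q(x+y) + Q(x) + Q(y) = ⟨x,y⟩`, it has Arf invariant `0` iff `#{x : Q x = 0} =
2^(m-1)(2^m+1)`, and it is fixed by `g` (for the action `(g·Q)(x) = Q(g⁻¹x)`) iff
`Q ∘ g = Q`.  Claim: for every `m ≥ 3` there is a subgroup `G` of `Sp_{2m}(𝔽₂)`
such that (a) no Arf-invariant-`0` quadratic form with the standard polar form is
fixed by every element of `G`, while (b) every single element of `G` fixes some
Arf-invariant-`0` quadratic form with the standard polar form. -/
theorem stmt14 (m : ℕ) (hm : 3 ≤ m) :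
    let V := (Fin m → ZMod 2) × (Fin m → ZMod 2)
    let B : V → V → ZMod 2 := fun x y => ∑ i, (x.1 i * y.2 i + x.2 i * y.1 i)
    let IsQuad : (V → ZMod 2) → Prop := fun Q => ∀ x y, Q (x + y) + Q x + Q y = B x y
    let Arf0 : (V → ZMod 2) → Prop := fun Q =>
      Nat.card {x : V // Q x = 0} = 2 ^ (m - 1) * (2 ^ m + 1)
    ∃ G : Subgroup (V ≃ₗ[ZMod 2] V),
      (∀ g ∈ G, ∀ x y : V, B (g x) (g y) = B x y) ∧
      (¬ ∃ Q : V → ZMod 2, IsQuad Q ∧ Arf0 Q ∧ ∀ g ∈ G, ∀ x, Q (g x) = Q x) ∧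
      (∀ g ∈ G, ∃ Q : V → ZMod 2, IsQuad Q ∧ Arf0 Q ∧ ∀ x, Q (g x) = Q x) := by
  intro V B IsQuad Arf0
  refine ⟨GG hm, ?_, ?_, ?_⟩
  · -- symplecticity
    rintro g ⟨α, β, γ, rfl⟩ x y
    show (∑ i, ((gp hm α β γ x).1 i * (gp hm α β γ y).2 i
        + (gp hm α β γ x).2 i * (gp hm α β γ y).1 i)) = ∑ i, (x.1 i * y.2 i + x.2 i * y.1 i)
    simp only [gp_apply]
    have hpt : ∀ i : Fin m,
        (x.1 + vv hm (α * x.2 (i0 hm) + γ * x.2 (i1 hm))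
            (γ * x.2 (i0 hm) + β * x.2 (i1 hm))) i * y.2 i
          + x.2 i * (y.1 + vv hm (α * y.2 (i0 hm) + γ * y.2 (i1 hm))
            (γ * y.2 (i0 hm) + β * y.2 (i1 hm))) i
        = (x.1 i * y.2 i + x.2 i * y.1 i)
          + (vv hm (α * x.2 (i0 hm) + γ * x.2 (i1 hm))
              (γ * x.2 (i0 hm) + β * x.2 (i1 hm)) i * y.2 i
            + x.2 i * vv hm (α * y.2 (i0 hm) + γ * y.2 (i1 hm))
              (γ * y.2 (i0 hm) + β * y.2 (i1 hm)) i) := by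
      intro i; simp only [Pi.add_apply]; ring
    rw [Finset.sum_congr rfl fun i _ => hpt i, Finset.sum_add_distrib,
      Finset.sum_add_distrib, Finset.sum_add_distrib, sum_vv_mul, sum_mul_vv,
      add_eq_left]
    have h := key_sympl α β γ (x.2 (i0 hm)) (x.2 (i1 hm)) (y.2 (i0 hm)) (y.2 (i1 hm))
    linear_combination h
  · -- no common fixed Arf-0 form
    rintro ⟨Q, hQuad, -, hfix⟩
    have hQadd : ∀ x y : V, Q (x + y) = Q x + Q y + B x y := by
      intro x y
      have h := hQuad x y
      linear_combination h - z2_add_self (Q x) - z2_add_self (Q y)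
    have hBrt : ∀ p q p' q' : ZMod 2,
        B (vv hm p q, 0) ((0 : Fin m → ZMod 2), vv hm p' q') = p * p' + q * q' := by
      intro p q p' q'
      show (∑ i, (vv hm p q i * vv hm p' q' i
          + (0 : Fin m → ZMod 2) i * (0 : Fin m → ZMod 2) i)) = _
      have hz : ∀ i : Fin m, vv hm p q i * vv hm p' q' i
          + (0 : Fin m → ZMod 2) i * (0 : Fin m → ZMod 2) i
          = vv hm p q i * vv hm p' q' i := by intro i; simp
      rw [Finset.sum_congr rfl fun i _ => hz i, sum_vv_mul, vv_i0, vv_i1]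
    have e1 : gp hm 1 0 0 (((0 : Fin m → ZMod 2), vv hm 1 0) : V)
        = ((vv hm 1 0, (0 : Fin m → ZMod 2)) : V) + ((0 : Fin m → ZMod 2), vv hm 1 0) := by
      rw [gp_apply]
      refine Prod.ext ?_ ?_ <;> simp [vv_i0, vv_i1]
    have e2 : gp hm 0 1 0 (((0 : Fin m → ZMod 2), vv hm 0 1) : V)
        = ((vv hm 0 1, (0 : Fin m → ZMod 2)) : V) + ((0 : Fin m → ZMod 2), vv hm 0 1) := by
      rw [gp_apply]
      refine Prod.ext ?_ ?_ <;> simp [vv_i0, vv_i1]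
    have e3 : gp hm 1 1 1 (((0 : Fin m → ZMod 2), vv hm 1 0) : V)
        = ((vv hm 1 1, (0 : Fin m → ZMod 2)) : V) + ((0 : Fin m → ZMod 2), vv hm 1 0) := by
      rw [gp_apply]
      refine Prod.ext ?_ ?_ <;> simp [vv_i0, vv_i1]
    have fix1 : Q (((vv hm 1 0, (0 : Fin m → ZMod 2)) : V) + ((0 : Fin m → ZMod 2), vv hm 1 0))
        = Q ((0 : Fin m → ZMod 2), vv hm 1 0) := by
      rw [← e1]; exact hfix _ ⟨1, 0, 0, rfl⟩ _
    have fix2 : Q (((vv hm 0 1, (0 : Fin m → ZMod 2)) : V) + ((0 : Fin m → ZMod 2), vv hm 0 1))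
        = Q ((0 : Fin m → ZMod 2), vv hm 0 1) := by
      rw [← e2]; exact hfix _ ⟨0, 1, 0, rfl⟩ _
    have fix3 : Q (((vv hm 1 1, (0 : Fin m → ZMod 2)) : V) + ((0 : Fin m → ZMod 2), vv hm 1 0))
        = Q ((0 : Fin m → ZMod 2), vv hm 1 0) := by
      rw [← e3]; exact hfix _ ⟨1, 1, 1, rfl⟩ _
    have hQ1 : Q ((vv hm 1 0, (0 : Fin m → ZMod 2)) : V) = 1 := by
      have h := hQadd (vv hm 1 0, (0 : Fin m → ZMod 2)) ((0 : Fin m → ZMod 2), vv hm 1 0)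
      rw [fix1, hBrt] at h
      norm_num at h
      linear_combination -h - z2_add_self (1 : ZMod 2)
    have hQ2 : Q ((vv hm 0 1, (0 : Fin m → ZMod 2)) : V) = 1 := by
      have h := hQadd (vv hm 0 1, (0 : Fin m → ZMod 2)) ((0 : Fin m → ZMod 2), vv hm 0 1)
      rw [fix2, hBrt] at h
      norm_num at h
      linear_combination -h - z2_add_self (1 : ZMod 2)
    have hQ3 : Q ((vv hm 1 1, (0 : Fin m → ZMod 2)) : V) = 1 := by
      have h := hQadd (vv hm 1 1, (0 : Fin m → ZMod 2)) ((0 : Fin m → ZMod 2), vv hm 1 0)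
      rw [fix3, hBrt] at h
      norm_num at h
      linear_combination -h - z2_add_self (1 : ZMod 2)
    have hB0 : B ((vv hm 1 0, (0 : Fin m → ZMod 2)) : V)
        ((vv hm 0 1, (0 : Fin m → ZMod 2)) : V) = 0 := by
      show (∑ i, (vv hm 1 0 i * (0 : Fin m → ZMod 2) i
          + (0 : Fin m → ZMod 2) i * vv hm 0 1 i)) = 0
      simp
    have hsum : ((vv hm 1 0, (0 : Fin m → ZMod 2)) : V)
        + ((vv hm 0 1, (0 : Fin m → ZMod 2)) : V)
        = ((vv hm 1 1, (0 : Fin m → ZMod 2)) : V) := by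
      refine Prod.ext ?_ ?_
      · show vv hm 1 0 + vv hm 0 1 = vv hm 1 1
        rw [vv_add]; norm_num
      · show (0 : Fin m → ZMod 2) + 0 = 0
        simp
    have h := hQadd (vv hm 1 0, (0 : Fin m → ZMod 2)) (vv hm 0 1, (0 : Fin m → ZMod 2))
    rw [hsum, hB0, hQ1, hQ2, hQ3] at h
    exact absurd h (by decide)
  · -- every element fixes an Arf-0 form
    rintro g ⟨α, β, γ, rfl⟩
    obtain ⟨s0, s1, hs1, hs2⟩ := key_s α β γ
    refine ⟨fun x => ∑ i, x.1 i * (x.2 i + vv hm s0 s1 i), ?_, ?_, ?_⟩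
    · -- IsQuad
      intro x y
      show (∑ i, (x + y).1 i * ((x + y).2 i + vv hm s0 s1 i))
          + (∑ i, x.1 i * (x.2 i + vv hm s0 s1 i)) + (∑ i, y.1 i * (y.2 i + vv hm s0 s1 i))
        = ∑ i, (x.1 i * y.2 i + x.2 i * y.1 i)
      rw [add_assoc, ← Finset.sum_add_distrib, ← Finset.sum_add_distrib]
      refine Finset.sum_congr rfl fun i _ => ?_
      have h := key_quad (x.1 i) (x.2 i) (y.1 i) (y.2 i) (vv hm s0 s1 i)
      have hx1 : (x + y).1 i = x.1 i + y.1 i := rfl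
      have hx2 : (x + y).2 i = x.2 i + y.2 i := rfl
      rw [hx1, hx2]
      linear_combination h
    · -- Arf0
      show Nat.card {x : V // (∑ i, x.1 i * (x.2 i + vv hm s0 s1 i)) = 0}
        = 2 ^ (m - 1) * (2 ^ m + 1)
      have e : {x : V // (∑ i, x.1 i * (x.2 i + vv hm s0 s1 i)) = 0}
          ≃ {x : V // (∑ i, x.1 i * x.2 i) = 0} :=
        Equiv.subtypeEquiv
          (Equiv.prodCongr (Equiv.refl _) (Equiv.addRight (vv hm s0 s1))) fun x => Iff.rfl
      rw [Nat.card_congr e]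
      exact count0 (by omega)
    · -- fixed
      intro x
      rw [gp_apply]
      show (∑ i, (x.1 + vv hm (α * x.2 (i0 hm) + γ * x.2 (i1 hm))
          (γ * x.2 (i0 hm) + β * x.2 (i1 hm))) i * (x.2 i + vv hm s0 s1 i))
        = ∑ i, x.1 i * (x.2 i + vv hm s0 s1 i)
      have hpt : ∀ i : Fin m, (x.1 + vv hm (α * x.2 (i0 hm) + γ * x.2 (i1 hm))
          (γ * x.2 (i0 hm) + β * x.2 (i1 hm))) i * (x.2 i + vv hm s0 s1 i)
          = x.1 i * (x.2 i + vv hm s0 s1 i)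
            + vv hm (α * x.2 (i0 hm) + γ * x.2 (i1 hm))
              (γ * x.2 (i0 hm) + β * x.2 (i1 hm)) i * (x.2 i + vv hm s0 s1 i) := by
        intro i; simp only [Pi.add_apply]; ring
      rw [Finset.sum_congr rfl fun i _ => hpt i, Finset.sum_add_distrib, sum_vv_mul,
        add_eq_left, vv_i0, vv_i1]
      have h := key_fix α β γ s0 s1 (x.2 (i0 hm)) (x.2 (i1 hm)) hs1 hs2
      linear_combination h
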